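/- For all integers k ≥ 2 and m ≥ 2, the sum over all strictly increasing sequences 1 < i_1 < i_2 < ... < i_k < m of integers of the product ∏_{j=1}^{k-1} (i_{j+1} - i_j) equals the binomial coefficient C(m+k-3, 2k-1). -/

import Mathlib

open Finset

def PP (k : ℕ) (s : Finset ℕ) : ℕ :=
  ∏ j ∈ Finset.range (k - 1), ((s.sort (· ≤ ·)).getD (j + 1) 0 - (s.sort (· ≤ ·)).getD j 0)

def SS (m k : ℕ) : ℕ := ∑ s ∈ (Finset.Ioo 1 m).powersetCard k, PP k s

def GG (m k : ℕ) : ℕ :=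
  ∑ s ∈ (Finset.Ioo 1 m).powersetCard k, PP k s * (m - (s.sort (· ≤ ·)).getD (k - 1) 0)

lemma sort_insert_top {a : ℕ} {s : Finset ℕ} (h : ∀ b ∈ s, b < a) :
    (insert a s).sort (· ≤ ·) = s.sort (· ≤ ·) ++ [a] := by
  have ha : a ∉ s := fun hb => lt_irrefl a (h a hb)
  refine (fun hp h1 h2 => List.Perm.eq_of_pairwise' (r := (· ≤ ·)) h1 h2 hp) ?_ ?_ ?_
  · refine (Finset.sort_perm_toList _ _).trans ?_
    refine ((Finset.toList_insert ha).trans ?_).trans (List.perm_append_singleton a _).symm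
    exact (Finset.sort_perm_toList _ _).symm.cons a
  · exact Finset.pairwise_sort _ _
  · rw [List.pairwise_append]
    refine ⟨Finset.pairwise_sort _ _, List.pairwise_singleton _ _, ?_⟩
    intro x hx y hy
    rw [List.mem_singleton] at hy
    subst hy
    exact (h x ((Finset.mem_sort _).mp hx)).le

lemma PP_insert {a k : ℕ} {t : Finset ℕ} (hk : 2 ≤ k) (hcard : t.card = k - 1)
    (h : ∀ b ∈ t, b < a) :
    PP k (insert a t) = PP (k - 1) t * (a - (t.sort (· ≤ ·)).getD (k - 2) 0) := by
  unfold PP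
  rw [sort_insert_top h]
  have hlen : (t.sort (· ≤ ·)).length = k - 1 := by rw [Finset.length_sort, hcard]
  have hk1 : k - 1 = (k - 2) + 1 := by omega
  rw [hk1, Finset.prod_range_succ]
  congr 1
  · refine Finset.prod_congr rfl fun j hj => ?_
    rw [Finset.mem_range] at hj
    rw [List.getD_append _ _ _ _ (by omega), List.getD_append _ _ _ _ (by omega)]
  · rw [List.getD_append_right _ _ _ _ (by omega),
        List.getD_append _ _ _ _ (by omega)]
    rw [hlen, show k - 2 + 1 - (k - 1) = 0 from by omega]
    rfl

lemma getD_last_mem {k : ℕ} {s : Finset ℕ} (hk : 1 ≤ k) (hc : s.card = k) :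
    (s.sort (· ≤ ·)).getD (k - 1) 0 ∈ s := by
  have hlen : (s.sort (· ≤ ·)).length = k := by rw [Finset.length_sort, hc]
  rw [List.getD_eq_getElem _ _ (by omega)]
  exact (Finset.mem_sort _).mp (List.getElem_mem _)

lemma getD_insert_top {a k : ℕ} {t : Finset ℕ} (hk : 1 ≤ k) (hcard : t.card = k - 1)
    (h : ∀ b ∈ t, b < a) :
    ((insert a t).sort (· ≤ ·)).getD (k - 1) 0 = a := by
  rw [sort_insert_top h]
  have hlen : (t.sort (· ≤ ·)).length = k - 1 := by rw [Finset.length_sort, hcard]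
  rw [List.getD_append_right _ _ _ _ (by omega)]
  simp [hlen]

lemma sum_split (m k : ℕ) (hm : 2 ≤ m) (f : Finset ℕ → ℕ) :
    ∑ s ∈ (Ioo 1 (m + 1)).powersetCard (k + 1), f s =
    (∑ s ∈ (Ioo 1 m).powersetCard (k + 1), f s) +
    ∑ t ∈ (Ioo 1 m).powersetCard k, f (insert m t) := by
  have hnm : m ∉ Ioo 1 m := by simp
  have h1 : Ioo 1 (m + 1) = insert m (Ioo 1 m) := by
    ext x; simp only [mem_Ioo, mem_insert]; omega
  rw [h1, Finset.powersetCard_succ_insert hnm, Finset.sum_union, Finset.sum_image]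
  · intro x hx y hy hxy
    rw [Finset.mem_coe, Finset.mem_powersetCard] at hx hy
    have hx' : m ∉ x := fun hmem => hnm (hx.1 hmem)
    have hy' : m ∉ y := fun hmem => hnm (hy.1 hmem)
    rw [← Finset.erase_insert hx', ← Finset.erase_insert hy', hxy]
  · rw [Finset.disjoint_left]
    intro s hs hs'
    rw [Finset.mem_powersetCard] at hs
    rw [Finset.mem_image] at hs'
    obtain ⟨t, _, rfl⟩ := hs'
    exact hnm (hs.1 (Finset.mem_insert_self m t))

lemma SS_one (m : ℕ) : SS m 1 = m - 2 := by
  unfold SS PP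
  simp only [Nat.sub_self, Finset.range_zero, Finset.prod_empty]
  rw [Finset.sum_const, smul_eq_mul, mul_one, Finset.card_powersetCard, Nat.card_Ioo,
    Nat.choose_one_right]
  omega

lemma Ioo_one_two : Ioo 1 2 = (∅ : Finset ℕ) := by
  ext x; simp only [mem_Ioo, Finset.notMem_empty, iff_false]; omega

lemma SS_base (k : ℕ) (hk : 1 ≤ k) : SS 2 k = 0 := by
  unfold SS
  rw [Ioo_one_two, Finset.powersetCard_eq_empty.mpr (by simp; omega), Finset.sum_empty]

lemma GG_base (k : ℕ) (hk : 1 ≤ k) : GG 2 k = 0 := by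
  unfold GG
  rw [Ioo_one_two, Finset.powersetCard_eq_empty.mpr (by simp; omega), Finset.sum_empty]

lemma SS_succ (m k : ℕ) (hm : 2 ≤ m) (hk : 2 ≤ k) :
    SS (m + 1) k = SS m k + GG m (k - 1) := by
  obtain ⟨k', rfl⟩ : ∃ k', k = k' + 1 := ⟨k - 1, by omega⟩
  unfold SS
  rw [sum_split m k' hm (PP (k' + 1))]
  congr 1
  unfold GG
  refine Finset.sum_congr rfl fun t ht => ?_
  rw [Finset.mem_powersetCard] at ht
  have hlt : ∀ b ∈ t, b < m := fun b hb => (Finset.mem_Ioo.mp (ht.1 hb)).2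
  have h := PP_insert (a := m) (t := t) hk (by omega) hlt
  simpa using h

lemma GG_notop (m k : ℕ) :
    ∑ s ∈ (Ioo 1 m).powersetCard (k + 1),
      PP (k + 1) s * (m + 1 - (s.sort (· ≤ ·)).getD k 0) = GG m (k + 1) + SS m (k + 1) := by
  unfold GG SS
  rw [← Finset.sum_add_distrib]
  refine Finset.sum_congr rfl fun s hs => ?_
  rw [Finset.mem_powersetCard] at hs
  have hx : (s.sort (· ≤ ·)).getD (k + 1 - 1) 0 ∈ s := getD_last_mem (by omega) hs.2
  simp only [Nat.add_sub_cancel] at hx ⊢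
  have hxm : (s.sort (· ≤ ·)).getD k 0 < m := (Finset.mem_Ioo.mp (hs.1 hx)).2
  rw [show m + 1 - (s.sort (· ≤ ·)).getD k 0 = (m - (s.sort (· ≤ ·)).getD k 0) + 1 from by omega,
    Nat.mul_add, mul_one]

lemma GG_succ (m k : ℕ) (hm : 2 ≤ m) (hk : 2 ≤ k) :
    GG (m + 1) k = (GG m k + SS m k) + GG m (k - 1) := by
  obtain ⟨k', rfl⟩ : ∃ k', k = k' + 1 := ⟨k - 1, by omega⟩
  unfold GG
  rw [sum_split m k' hm
    (fun s => PP (k' + 1) s * (m + 1 - (s.sort (· ≤ ·)).getD (k' + 1 - 1) 0))]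
  simp only [Nat.add_sub_cancel]
  rw [GG_notop m k']
  congr 1
  refine Finset.sum_congr rfl fun t ht => ?_
  rw [Finset.mem_powersetCard] at ht
  have hlt : ∀ b ∈ t, b < m := fun b hb => (Finset.mem_Ioo.mp (ht.1 hb)).2
  have hg := getD_insert_top (a := m) (k := k' + 1) (t := t) (by omega) (by omega) hlt
  simp only [Nat.add_sub_cancel] at hg
  rw [hg, PP_insert (a := m) hk (by omega) hlt]
  rw [show k' + 1 - 2 = k' - 1 from by omega, show k' + 1 - 1 = k' from by omega,
    Nat.add_sub_cancel_left, mul_one]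

lemma GG_one_succ (m : ℕ) (hm : 2 ≤ m) : GG (m + 1) 1 = (GG m 1 + SS m 1) + 1 := by
  unfold GG
  rw [sum_split m 0 hm (fun s => PP 1 s * (m + 1 - (s.sort (· ≤ ·)).getD (1 - 1) 0))]
  simp only [Nat.sub_self]
  rw [GG_notop m 0]
  congr 1
  rw [Finset.powersetCard_zero, Finset.sum_singleton]
  have h1 : insert m (∅ : Finset ℕ) = {m} := rfl
  rw [h1, show PP 1 {m} = 1 from by unfold PP; simp, Finset.sort_singleton]
  simp only [List.getD_cons_zero, one_mul]
  omega

lemma main_ind (m : ℕ) (hm : 2 ≤ m) : ∀ k, 1 ≤ k →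
    SS m k = Nat.choose (m + k - 3) (2 * k - 1) ∧ GG m k = Nat.choose (m + k - 2) (2 * k) := by
  induction m, hm using Nat.le_induction with
  | base =>
    intro k hk
    refine ⟨?_, ?_⟩
    · rw [SS_base k hk, Nat.choose_eq_zero_of_lt (by omega)]
    · rw [GG_base k hk, Nat.choose_eq_zero_of_lt (by omega)]
  | succ m hm ih =>
    intro k hk
    rcases eq_or_lt_of_le hk with h1 | h2
    · subst h1
      obtain ⟨n, rfl⟩ : ∃ n, m = n + 2 := ⟨m - 2, by omega⟩
      refine ⟨?_, ?_⟩
      · rw [SS_one, show n + 2 + 1 + 1 - 3 = n + 1 from by omega,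
          show 2 * 1 - 1 = 1 from rfl, Nat.choose_one_right]
        omega
      · rw [GG_one_succ _ (by omega), (ih 1 le_rfl).1, (ih 1 le_rfl).2,
          show n + 2 + 1 - 3 = n from by omega, show 2 * 1 - 1 = 1 from rfl,
          show n + 2 + 1 - 2 = n + 1 from by omega, show 2 * 1 = 2 from rfl,
          show n + 2 + 1 + 1 - 2 = n + 2 from by omega,
          Nat.choose_one_right,
          show (n + 2 : ℕ) = (n + 1) + 1 from rfl, show (2 : ℕ) = 1 + 1 from rfl,
          Nat.choose_succ_succ (n + 1) 1, Nat.choose_one_right]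
        simp only [Nat.succ_eq_add_one]
        omega
    · obtain ⟨j, rfl⟩ : ∃ j, k = j + 2 := ⟨k - 2, by omega⟩
      obtain ⟨n, rfl⟩ : ∃ n, m = n + 2 := ⟨m - 2, by omega⟩
      have ihk := ih (j + 2) (by omega)
      have ihk1 := ih (j + 1) (by omega)
      refine ⟨?_, ?_⟩
      · rw [SS_succ _ _ (by omega) (by omega), ihk.1,
          show j + 2 - 1 = j + 1 from rfl, ihk1.2,
          show n + 2 + (j + 2) - 3 = n + j + 1 from by omega,
          show 2 * (j + 2) - 1 = 2 * j + 3 from by omega,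
          show n + 2 + (j + 1) - 2 = n + j + 1 from by omega,
          show 2 * (j + 1) = 2 * j + 2 from by ring,
          show n + 2 + 1 + (j + 2) - 3 = n + j + 2 from by omega,
          show (n + j + 2 : ℕ) = (n + j + 1) + 1 from rfl,
          show (2 * j + 3 : ℕ) = (2 * j + 2) + 1 from rfl,
          Nat.choose_succ_succ (n + j + 1) (2 * j + 2)]
        simp only [Nat.succ_eq_add_one]
        omega
      · rw [GG_succ _ _ (by omega) (by omega), ihk.1, ihk.2,
          show j + 2 - 1 = j + 1 from rfl, ihk1.2,
          show n + 2 + (j + 2) - 3 = n + j + 1 from by omega,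
          show 2 * (j + 2) - 1 = 2 * j + 3 from by omega,
          show n + 2 + (j + 2) - 2 = n + j + 2 from by omega,
          show 2 * (j + 2) = 2 * j + 4 from by ring,
          show n + 2 + (j + 1) - 2 = n + j + 1 from by omega,
          show 2 * (j + 1) = 2 * j + 2 from by ring,
          show n + 2 + 1 + (j + 2) - 2 = n + j + 3 from by omega,
          show (n + j + 3 : ℕ) = (n + j + 2) + 1 from rfl,
          show (2 * j + 4 : ℕ) = (2 * j + 3) + 1 from rfl,
          Nat.choose_succ_succ (n + j + 2) (2 * j + 3),
          show (n + j + 2 : ℕ) = (n + j + 1) + 1 from rfl,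
          show (2 * j + 3 : ℕ) = (2 * j + 2) + 1 from rfl,
          Nat.choose_succ_succ (n + j + 1) (2 * j + 2)]
        simp only [Nat.succ_eq_add_one]
        rw [show (2 * j + 3 : ℕ) = 2 * j + 2 + 1 from rfl]
        omega

theorem sum_prod_diff_open (k m : ℕ) (hk : 2 ≤ k) (hm : 2 ≤ m) :
    ∑ s ∈ (Finset.Ioo 1 m).powersetCard k,
      ∏ j ∈ Finset.range (k - 1),
        ((s.sort (· ≤ ·)).getD (j + 1) 0 - (s.sort (· ≤ ·)).getD j 0) =
      Nat.choose (m + k - 3) (2 * k - 1) := by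
  exact (main_ind m hm k (by omega)).1
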